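/- Let ν be a bounded weight with inf ν > 0. The space WPAA(ℝ,ν) = { g + φ : g almost automorphic, φ ∈ WPAA₀(ℝ,ν) }, equipped with the supremum norm, is a Banach space (i.e., it is closed in the space of bounded continuous functions). -/

import Mathlib

open Filter MeasureTheory BoundedContinuousFunction

def AlmostAutomorphic {n : ℕ} (f : ℝ → (Fin n → ℝ)) : Prop :=
  ∀ s : ℕ → ℝ, ∃ φ : ℕ → ℕ, StrictMono φ ∧ ∃ g : ℝ → (Fin n → ℝ),
    (∀ t : ℝ, Tendsto (fun k => f (t + s (φ k))) atTop (nhds (g t))) ∧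
    (∀ t : ℝ, Tendsto (fun k => g (t - s (φ k))) atTop (nhds (f t)))

def WPAA0 {n : ℕ} (ν : ℝ → ℝ) (φ : ℝ → (Fin n → ℝ)) : Prop :=
  Continuous φ ∧ (∃ C : ℝ, ∀ t, ‖φ t‖ ≤ C) ∧
  Tendsto (fun r : ℝ =>
      (∫ s in (-r)..r, ‖φ s‖ * ν s) / (∫ s in (-r)..r, ν s)) atTop (nhds 0)

def WeightUB (ν : ℝ → ℝ) : Prop :=
  (∀ s, 0 < ν s) ∧ LocallyIntegrable ν volume ∧
  (∃ b : ℝ, ∀ s, ν s ≤ b) ∧ (∃ a : ℝ, 0 < a ∧ ∀ s, a ≤ ν s) ∧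
  Tendsto (fun r : ℝ => ∫ s in (-r)..r, ν s) atTop atTop

namespace Stmt13Aux

variable {n : ℕ} {ν : ℝ → ℝ}

lemma nu_int (hloc : LocallyIntegrable ν volume) (r1 r2 : ℝ) :
    IntervalIntegrable ν volume r1 r2 :=
  (hloc.integrableOn_isCompact isCompact_uIcc).intervalIntegrable

lemma norm_mul_intOn (hloc : LocallyIntegrable ν volume) {φ : ℝ → (Fin n → ℝ)}
    (hc : Continuous φ) (hbd : ∃ C, ∀ t, ‖φ t‖ ≤ C) (S : Set ℝ) (r1 r2 : ℝ)
    (hS : S ⊆ Set.Icc r1 r2) :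
    IntegrableOn (fun s => ‖φ s‖ * ν s) S volume := by
  obtain ⟨C, hC⟩ := hbd
  refine IntegrableOn.mono_set ?_ hS
  refine Integrable.bdd_mul (hloc.integrableOn_isCompact isCompact_Icc)
    (hc.norm.aestronglyMeasurable) (c := C) (ae_of_all _ fun x => ?_)
  rw [Real.norm_eq_abs, abs_of_nonneg (norm_nonneg _)]
  exact hC x

lemma norm_mul_int (hloc : LocallyIntegrable ν volume) {φ : ℝ → (Fin n → ℝ)}
    (hc : Continuous φ) (hbd : ∃ C, ∀ t, ‖φ t‖ ≤ C) (r1 r2 : ℝ) :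
    IntervalIntegrable (fun s => ‖φ s‖ * ν s) volume r1 r2 := by
  rw [intervalIntegrable_iff]
  exact norm_mul_intOn hloc hc hbd _ _ _ (by rw [Set.uIoc]; exact Set.Ioc_subset_Icc_self)

lemma denom_lb (hloc : LocallyIntegrable ν volume) {a : ℝ} (hab : ∀ s, a ≤ ν s)
    {r : ℝ} (hr : 0 ≤ r) : 2 * r * a ≤ ∫ s in (-r)..r, ν s := by
  have h := intervalIntegral.integral_mono_on (by linarith : -r ≤ r)
    intervalIntegrable_const (nu_int hloc _ _) (fun x _ => hab x)
  rw [intervalIntegral.integral_const, smul_eq_mul, sub_neg_eq_add, ← two_mul] at h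
  exact h

lemma denom_ub (hloc : LocallyIntegrable ν volume) {b : ℝ} (hb : ∀ s, ν s ≤ b)
    {r : ℝ} (hr : 0 ≤ r) : (∫ s in (-r)..r, ν s) ≤ 2 * r * b := by
  have h := intervalIntegral.integral_mono_on (by linarith : -r ≤ r)
    (nu_int hloc _ _) intervalIntegrable_const (fun x _ => hb x)
  rw [intervalIntegral.integral_const, smul_eq_mul, sub_neg_eq_add, ← two_mul] at h
  exact h

lemma denom_pos (hloc : LocallyIntegrable ν volume) {a : ℝ} (ha : 0 < a)
    (hab : ∀ s, a ≤ ν s) {r : ℝ} (hr : 0 < r) : 0 < ∫ s in (-r)..r, ν s :=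
  lt_of_lt_of_le (by positivity) (denom_lb hloc hab hr.le)

lemma mean_nonneg (hloc : LocallyIntegrable ν volume) {a : ℝ} (ha : 0 < a)
    (hab : ∀ s, a ≤ ν s) (hν0 : ∀ s, 0 ≤ ν s) {γ : ℝ → (Fin n → ℝ)} {r : ℝ} (hr : 0 < r) :
    0 ≤ (∫ s in (-r)..r, ‖γ s‖ * ν s) / (∫ s in (-r)..r, ν s) := by
  refine div_nonneg ?_ (denom_pos hloc ha hab hr).le
  exact intervalIntegral.integral_nonneg (by linarith)
    (fun x _ => mul_nonneg (norm_nonneg _) (hν0 x))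

lemma mean_le_add (hloc : LocallyIntegrable ν volume) {a : ℝ} (ha : 0 < a)
    (hab : ∀ s, a ≤ ν s) (hν0 : ∀ s, 0 ≤ ν s)
    {α β γ : ℝ → (Fin n → ℝ)} (hαc : Continuous α) (hαb : ∃ C, ∀ t, ‖α t‖ ≤ C)
    (hβc : Continuous β) (hβb : ∃ C, ∀ t, ‖β t‖ ≤ C)
    (hγc : Continuous γ) (hγb : ∃ C, ∀ t, ‖γ t‖ ≤ C)
    {c : ℝ} (hpt : ∀ s, ‖γ s‖ ≤ ‖α s‖ + ‖β s‖ + c) {r : ℝ} (hr : 0 < r) :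
    (∫ s in (-r)..r, ‖γ s‖ * ν s) / (∫ s in (-r)..r, ν s) ≤
      (∫ s in (-r)..r, ‖α s‖ * ν s) / (∫ s in (-r)..r, ν s) +
      (∫ s in (-r)..r, ‖β s‖ * ν s) / (∫ s in (-r)..r, ν s) + c := by
  have hDpos : 0 < ∫ s in (-r)..r, ν s := denom_pos hloc ha hab hr
  have h1 : (∫ s in (-r)..r, ‖γ s‖ * ν s) ≤
      ∫ s in (-r)..r, (‖α s‖ * ν s + ‖β s‖ * ν s + c * ν s) := by
    refine intervalIntegral.integral_mono_on (by linarith)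
      (norm_mul_int hloc hγc hγb _ _)
      (((norm_mul_int hloc hαc hαb _ _).add (norm_mul_int hloc hβc hβb _ _)).add
        ((nu_int hloc _ _).const_mul c)) (fun x _ => ?_)
    have h := mul_le_mul_of_nonneg_right (hpt x) (hν0 x)
    rw [add_mul, add_mul] at h
    exact h
  rw [intervalIntegral.integral_add ((norm_mul_int hloc hαc hαb _ _).add
      (norm_mul_int hloc hβc hβb _ _)) ((nu_int hloc _ _).const_mul c),
    intervalIntegral.integral_add (norm_mul_int hloc hαc hαb _ _)
      (norm_mul_int hloc hβc hβb _ _), intervalIntegral.integral_const_mul] at h1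
  calc (∫ s in (-r)..r, ‖γ s‖ * ν s) / (∫ s in (-r)..r, ν s)
      ≤ ((∫ s in (-r)..r, ‖α s‖ * ν s) + (∫ s in (-r)..r, ‖β s‖ * ν s) +
          c * (∫ s in (-r)..r, ν s)) / (∫ s in (-r)..r, ν s) := by
        exact div_le_div_of_nonneg_right h1 hDpos.le |>.trans_eq rfl
    _ = _ := by
        rw [add_div, add_div, mul_div_assoc, div_self hDpos.ne', mul_one]

lemma wpaa0_sub (hν : WeightUB ν) {φ ψ : ℝ → (Fin n → ℝ)} (hφ : WPAA0 ν φ)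
    (hψ : WPAA0 ν ψ) : WPAA0 ν (fun t => φ t - ψ t) := by
  obtain ⟨hpos, hloc, ⟨b, hb⟩, ⟨a, ha, hab⟩, htop⟩ := hν
  obtain ⟨hφc, hφb, hφm⟩ := hφ
  obtain ⟨hψc, hψb, hψm⟩ := hψ
  have hν0 : ∀ s, 0 ≤ ν s := fun s => (hpos s).le
  refine ⟨hφc.sub hψc, ?_, ?_⟩
  · obtain ⟨C1, h1⟩ := hφb; obtain ⟨C2, h2⟩ := hψb
    exact ⟨C1 + C2, fun t => (norm_sub_le _ _).trans (add_le_add (h1 t) (h2 t))⟩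
  · have hbb : ∃ C, ∀ t, ‖φ t - ψ t‖ ≤ C := by
      obtain ⟨C1, h1⟩ := hφb; obtain ⟨C2, h2⟩ := hψb
      exact ⟨C1 + C2, fun t => (norm_sub_le _ _).trans (add_le_add (h1 t) (h2 t))⟩
    refine squeeze_zero' ?_ ?_ (by simpa using hφm.add hψm)
    · filter_upwards [eventually_gt_atTop (0:ℝ)] with r hr
      exact mean_nonneg hloc ha hab hν0 hr
    · filter_upwards [eventually_gt_atTop (0:ℝ)] with r hr
      have h := mean_le_add (α := φ) (β := ψ) (γ := fun t => φ t - ψ t) hloc ha hab hν0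
        hφc hφb hψc hψb (hφc.sub hψc) hbb (c := 0)
        (fun s => by simpa using norm_sub_le (φ s) (ψ s)) hr
      simpa using h

lemma wpaa0_of_unif (hν : WeightUB ν) {Φ : ℕ → ℝ → (Fin n → ℝ)} {φ : ℝ → (Fin n → ℝ)}
    (hΦ : ∀ k, WPAA0 ν (Φ k)) (hc : Continuous φ) (hb : ∃ C, ∀ t, ‖φ t‖ ≤ C)
    (happrox : ∀ ε > (0:ℝ), ∃ k, ∀ t, ‖φ t - Φ k t‖ ≤ ε) : WPAA0 ν φ := by
  obtain ⟨hpos, hloc, ⟨b, hbν⟩, ⟨a, ha, hab⟩, htop⟩ := hν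
  have hν0 : ∀ s, 0 ≤ ν s := fun s => (hpos s).le
  refine ⟨hc, hb, ?_⟩
  rw [Metric.tendsto_atTop]
  intro ε hε
  obtain ⟨k, hk⟩ := happrox (ε/4) (by linarith)
  have hm := (hΦ k).2.2
  rw [Metric.tendsto_atTop] at hm
  obtain ⟨N, hN⟩ := hm (ε/4) (by linarith)
  refine ⟨max N 1, fun r hr => ?_⟩
  have hr1 : (1:ℝ) ≤ r := le_trans (le_max_right _ _) hr
  have hrpos : (0:ℝ) < r := by linarith
  have hmean := mean_le_add (α := Φ k) (β := fun _ => (0 : Fin n → ℝ)) (γ := φ)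
    hloc ha hab hν0 (hΦ k).1 (hΦ k).2.1 continuous_const ⟨0, fun t => by simp⟩
    hc hb (c := ε/4) (fun s => ?_) hrpos
  · have hz : (∫ s in (-r)..r, ‖(fun _ => (0 : Fin n → ℝ)) s‖ * ν s) = 0 := by
      simp
    rw [hz, zero_div, add_zero] at hmean
    have hmk := hN r (le_trans (le_max_left _ _) hr)
    rw [Real.dist_eq, sub_zero] at hmk
    have h1 := le_abs_self ((∫ s in (-r)..r, ‖Φ k s‖ * ν s) / (∫ s in (-r)..r, ν s))
    have h0 := mean_nonneg (γ := φ) hloc ha hab hν0 hrpos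
    rw [Real.dist_eq, sub_zero, abs_of_nonneg h0]
    linarith
  · have h1 : ‖φ s‖ - ‖Φ k s‖ ≤ ‖φ s - Φ k s‖ := norm_sub_norm_le _ _
    have h2 := hk s
    simp only [norm_zero]
    linarith

lemma list_bound (L : List ℝ) : ∃ K, 0 ≤ K ∧ ∀ c ∈ L, |c| ≤ K := by
  induction L with
  | nil => exact ⟨0, le_refl _, by simp⟩
  | cons x xs ih =>
    obtain ⟨K, hK0, hK⟩ := ih
    refine ⟨max K |x|, le_trans hK0 (le_max_left _ _), fun c hc => ?_⟩
    rcases List.mem_cons.1 hc with h | h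
    · rw [h]; exact le_max_right _ _
    · exact (hK c h).trans (le_max_left _ _)

lemma avoid (hν : WeightUB ν) {φ : ℝ → (Fin n → ℝ)} (hφ : WPAA0 ν φ) {δ : ℝ}
    (hδ : 0 < δ) (L : List ℝ) : ∃ u : ℝ, ∀ c ∈ L, ‖φ (u + c)‖ < δ := by
  obtain ⟨K, hK0, hK⟩ := list_bound L
  obtain ⟨hpos, hloc, ⟨b, hb⟩, ⟨a, ha, hab⟩, htop⟩ := hν
  obtain ⟨hφc, hφb, hφm⟩ := hφ
  have hν0 : ∀ s, 0 ≤ ν s := fun s => (hpos s).le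
  have hbpos : 0 < b := lt_of_lt_of_le (hpos 0) (hb 0)
  by_contra hcon
  push_neg at hcon
  have hm : 0 < L.length := by
    obtain ⟨c, hc, -⟩ := hcon 0
    exact List.length_pos_iff.2 (List.ne_nil_of_mem hc)
  set m : ℕ := L.length with hmdef
  set E : Set ℝ := {x : ℝ | δ ≤ ‖φ x‖} with hE
  have hEmeas : MeasurableSet E := (isClosed_le continuous_const hφc.norm).measurableSet
  -- covering estimate
  have key : ∀ r : ℝ, 0 < r →
      ENNReal.ofReal r ≤ (m : ENNReal) * volume (E ∩ Set.Ioc (-(r+K)) (r+K)) := by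
    intro r hr
    have cover : Set.Ioc (0:ℝ) r ⊆
        ⋃ c ∈ L.toFinset, (fun x => x + c) ⁻¹' (E ∩ Set.Ioc (-(r+K)) (r+K)) := by
      intro x hx
      obtain ⟨c, hcL, hc⟩ := hcon x
      have hcK := abs_le.1 (hK c hcL)
      simp only [Set.mem_Ioc] at hx
      refine Set.mem_biUnion (List.mem_toFinset.2 hcL) ?_
      refine ⟨hc, ?_, ?_⟩
      · show -(r+K) < x + c
        linarith [hx.1, hcK.1]
      · show x + c ≤ r + K
        linarith [hx.2, hcK.2]
    calc ENNReal.ofReal r = volume (Set.Ioc (0:ℝ) r) := by rw [Real.volume_Ioc, sub_zero]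
      _ ≤ volume (⋃ c ∈ L.toFinset, (fun x => x + c) ⁻¹' (E ∩ Set.Ioc (-(r+K)) (r+K))) :=
          measure_mono cover
      _ ≤ ∑ c ∈ L.toFinset, volume ((fun x => x + c) ⁻¹' (E ∩ Set.Ioc (-(r+K)) (r+K))) :=
          measure_biUnion_finset_le _ _
      _ = ∑ c ∈ L.toFinset, volume (E ∩ Set.Ioc (-(r+K)) (r+K)) := by
          refine Finset.sum_congr rfl (fun c _ => ?_)
          exact measure_preimage_add_right volume c _
      _ = (L.toFinset.card : ENNReal) * volume (E ∩ Set.Ioc (-(r+K)) (r+K)) := by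
          rw [Finset.sum_const, nsmul_eq_mul]
      _ ≤ (m : ENNReal) * volume (E ∩ Set.Ioc (-(r+K)) (r+K)) := by
          exact mul_le_mul_left (by exact_mod_cast List.toFinset_card_le L) _
  -- real-valued consequences
  have main : ∀ r : ℝ, 0 < r →
      δ * a * (r / m) ≤ ∫ s in (-(r+K))..(r+K), ‖φ s‖ * ν s := by
    intro r hr
    set ρ := r + K with hρ
    have hρpos : 0 < ρ := by positivity
    have hfin : volume (E ∩ Set.Ioc (-ρ) ρ) ≠ ⊤ := by
      refine ((measure_mono Set.inter_subset_right).trans_lt ?_).ne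
      rw [Real.volume_Ioc]; exact ENNReal.ofReal_lt_top
    have hV : r / m ≤ (volume (E ∩ Set.Ioc (-ρ) ρ)).toReal := by
      have h := key r hr
      have h2 := ENNReal.toReal_le_toReal (ENNReal.ofReal_ne_top)
        (ENNReal.mul_ne_top (ENNReal.natCast_ne_top m) hfin) |>.2 h
      rw [ENNReal.toReal_ofReal hr.le, ENNReal.toReal_mul, ENNReal.toReal_natCast] at h2
      rw [div_le_iff₀ (by exact_mod_cast hm)]
      linarith [h2]
    have hsub : E ∩ Set.Ioc (-ρ) ρ ⊆ Set.Icc (-ρ) ρ :=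
      Set.inter_subset_right.trans Set.Ioc_subset_Icc_self
    have hint : IntegrableOn (fun s => ‖φ s‖ * ν s) (Set.Ioc (-ρ) ρ) volume :=
      norm_mul_intOn hloc hφc hφb _ _ _ Set.Ioc_subset_Icc_self
    have h1 : δ * a * (volume (E ∩ Set.Ioc (-ρ) ρ)).toReal ≤
        ∫ x in E ∩ Set.Ioc (-ρ) ρ, ‖φ x‖ * ν x := by
      have hc : ∫ _ in E ∩ Set.Ioc (-ρ) ρ, (δ * a) =
          (volume (E ∩ Set.Ioc (-ρ) ρ)).toReal * (δ * a) := by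
        rw [setIntegral_const, smul_eq_mul, measureReal_def]
      rw [mul_comm (δ * a) _, ← hc]
      refine setIntegral_mono_on (integrableOn_const ?_)
        (hint.mono_set Set.inter_subset_right) (hEmeas.inter measurableSet_Ioc)
        (fun x hx => ?_)
      · exact hfin
      · exact mul_le_mul hx.1 (hab x) ha.le (norm_nonneg _)
    have h2 : (∫ x in E ∩ Set.Ioc (-ρ) ρ, ‖φ x‖ * ν x) ≤
        ∫ x in Set.Ioc (-ρ) ρ, ‖φ x‖ * ν x := by
      refine setIntegral_mono_set hint ?_ (HasSubset.Subset.eventuallyLE Set.inter_subset_right)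
      filter_upwards with x using mul_nonneg (norm_nonneg _) (hν0 x)
    rw [intervalIntegral.integral_of_le (by linarith)]
    calc δ * a * (r / m) ≤ δ * a * (volume (E ∩ Set.Ioc (-ρ) ρ)).toReal := by
          exact mul_le_mul_of_nonneg_left hV (by positivity)
      _ ≤ _ := h1.trans h2
  -- contradiction with the ergodic mean
  set ε0 : ℝ := δ * a / (4 * b * m) with hε0
  have hε0pos : 0 < ε0 := by
    have : (0:ℝ) < m := by exact_mod_cast hm
    positivity
  rw [Metric.tendsto_atTop] at hφm
  obtain ⟨N, hN⟩ := hφm ε0 hε0pos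
  set r : ℝ := max 1 (max K N) with hrdef
  have hr1 : (1:ℝ) ≤ r := le_max_left _ _
  have hrK : K ≤ r := le_trans (le_max_left _ _) (le_max_right _ _)
  have hrN : N ≤ r := le_trans (le_max_right _ _) (le_max_right _ _)
  have hrpos : (0:ℝ) < r := by linarith
  set ρ := r + K with hρ
  have hρpos : 0 < ρ := by positivity
  have hρN : N ≤ ρ := by simp only [hρ]; linarith
  have hmean := hN ρ hρN
  rw [Real.dist_eq, sub_zero] at hmean
  have hDpos : 0 < ∫ s in (-ρ)..ρ, ν s := denom_pos hloc ha hab hρpos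
  have hDub : (∫ s in (-ρ)..ρ, ν s) ≤ 2 * ρ * b := denom_ub hloc hb hρpos.le
  have hnum := main r hrpos
  have hmR : (0:ℝ) < m := by exact_mod_cast hm
  have hlow : ε0 ≤ (∫ s in (-ρ)..ρ, ‖φ s‖ * ν s) / (∫ s in (-ρ)..ρ, ν s) := by
    have step1 : δ * a * (r / m) / (2 * ρ * b) ≤
        (∫ s in (-ρ)..ρ, ‖φ s‖ * ν s) / (∫ s in (-ρ)..ρ, ν s) := by
      apply div_le_div₀ (le_trans (by positivity) hnum) hnum hDpos hDub
    refine le_trans ?_ step1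
    rw [hε0, div_le_div_iff₀ (by positivity) (by positivity)]
    have hρ2 : ρ ≤ 2 * r := by simp only [hρ]; linarith
    have he : δ * a * (r / m) * (4 * b * m) = 2 * (δ * a) * b * (2 * r) := by
      field_simp
      ring
    have h3 : 2 * (δ * a) * b * ρ ≤ 2 * (δ * a) * b * (2 * r) :=
      mul_le_mul_of_nonneg_left hρ2 (by positivity)
    rw [show δ * a * (2 * ρ * b) = 2 * (δ * a) * b * ρ from by ring, he]
    exact h3
  have habs := le_abs_self ((∫ s in (-ρ)..ρ, ‖φ s‖ * ν s) / (∫ s in (-ρ)..ρ, ν s))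
  linarith

lemma key_est (hν : WeightUB ν) {g φ : ℝ → (Fin n → ℝ)} (hg : AlmostAutomorphic g)
    (hφ : WPAA0 ν φ) {C : ℝ} (hC : ∀ s, ‖g s + φ s‖ ≤ C) : ∀ t, ‖g t‖ ≤ C := by
  intro t₀
  classical
  have hava : ∀ (L : List ℝ) (δ : ℝ), 0 < δ → ∃ u, ∀ c ∈ L, ‖φ (u + c)‖ < δ :=
    fun L δ hδ => avoid hν hφ hδ L
  -- recursively construct the sequence
  let step : (ℕ → ℝ) → ℕ → ℝ := fun sOld m =>
    (hava ((List.range (m+1)).map (fun i => t₀ - sOld i)) ((1:ℝ)/((m:ℝ)+1))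
      (by positivity)).choose
  let SS : ℕ → ℕ → ℝ := fun m => Nat.rec (motive := fun _ => ℕ → ℝ) (fun _ => 0)
    (fun m' sOld => Function.update sOld (m'+1) (step sOld m')) m
  let s : ℕ → ℝ := fun m => SS m m
  have hSSsucc : ∀ m, SS (m+1) = Function.update (SS m) (m+1) (step (SS m) m) :=
    fun m => rfl
  have hcoh : ∀ m j, j ≤ m → SS m j = s j := by
    intro m
    induction m with
    | zero =>
      intro j hj
      have : j = 0 := Nat.le_zero.1 hj
      subst this; rfl
    | succ m ih =>
      intro j hj
      rcases eq_or_lt_of_le hj with h | h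
      · subst h; rfl
      · have hj' : j ≤ m := by omega
        have : SS (m+1) j = SS m j := by
          rw [hSSsucc]
          exact Function.update_of_ne (by omega) _ _
        rw [this, ih j hj']
  have hsmall : ∀ m, ∀ i ≤ m, ‖φ (s (m+1) + (t₀ - s i))‖ < (1:ℝ)/((m:ℝ)+1) := by
    intro m i him
    have hspec := (hava ((List.range (m+1)).map (fun i => t₀ - SS m i))
      ((1:ℝ)/((m:ℝ)+1)) (by positivity)).choose_spec
    have hmem : t₀ - SS m i ∈ (List.range (m+1)).map (fun i => t₀ - SS m i) :=
      List.mem_map_of_mem (List.mem_range.2 (by omega))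
    have h := hspec _ hmem
    have hs1 : s (m+1) = step (SS m) m := by
      show SS (m+1) (m+1) = _
      rw [hSSsucc]
      exact Function.update_self _ _ _
    rw [hs1, ← hcoh m i him]
    exact h
  have hPT : ∀ k, Tendsto (fun j => ‖φ (t₀ + s j - s k)‖) atTop (nhds 0) := by
    intro k
    refine squeeze_zero' (Eventually.of_forall fun _ => norm_nonneg _) ?_
      tendsto_one_div_atTop_nhds_zero_nat
    filter_upwards [eventually_ge_atTop (k+1)] with j hj
    obtain ⟨m, rfl⟩ : ∃ m, j = m + 1 := ⟨j - 1, by omega⟩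
    have h := hsmall m k (by omega)
    have harg : s (m+1) + (t₀ - s k) = t₀ + s (m+1) - s k := by ring
    rw [harg] at h
    refine h.le.trans ?_
    rw [Nat.cast_succ]
  obtain ⟨ψ, hψ, gh, hA1, hA2⟩ := hg s
  have hgh : ∀ k, ‖gh (t₀ - s (ψ k))‖ ≤ C := by
    intro k
    have h1 : Tendsto (fun j => ‖g ((t₀ - s (ψ k)) + s (ψ j))‖) atTop
        (nhds ‖gh (t₀ - s (ψ k))‖) := (hA1 _).norm
    have hφ0 : Tendsto (fun j => ‖φ ((t₀ - s (ψ k)) + s (ψ j))‖) atTop (nhds 0) := by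
      have := (hPT (ψ k)).comp hψ.tendsto_atTop
      have harg : ∀ j, (t₀ - s (ψ k)) + s (ψ j) = t₀ + s (ψ j) - s (ψ k) :=
        fun j => by ring
      simpa [harg, Function.comp_def] using this
    have h2 : Tendsto (fun j => C + ‖φ ((t₀ - s (ψ k)) + s (ψ j))‖) atTop (nhds C) := by
      simpa using tendsto_const_nhds.add hφ0
    refine le_of_tendsto_of_tendsto' h1 h2 (fun j => ?_)
    set u := (t₀ - s (ψ k)) + s (ψ j)
    have h3 := hC u
    have h4 : ‖g u‖ ≤ ‖g u + φ u‖ + ‖φ u‖ := by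
      simpa using norm_sub_le (g u + φ u) (φ u)
    linarith
  exact le_of_tendsto (hA2 t₀).norm (Eventually.of_forall hgh)

lemma aa_sub {g₁ g₂ : ℝ → (Fin n → ℝ)} (h1 : AlmostAutomorphic g₁)
    (h2 : AlmostAutomorphic g₂) : AlmostAutomorphic (fun t => g₁ t - g₂ t) := by
  intro s
  obtain ⟨ψ1, hψ1, G1, hA1, hB1⟩ := h1 s
  obtain ⟨ψ2, hψ2, G2, hA2, hB2⟩ := h2 (s ∘ ψ1)
  refine ⟨ψ1 ∘ ψ2, hψ1.comp hψ2, fun t => G1 t - G2 t, fun t => ?_, fun t => ?_⟩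
  · exact ((hA1 t).comp hψ2.tendsto_atTop).sub (hA2 t)
  · exact ((hB1 t).comp hψ2.tendsto_atTop).sub (hB2 t)

lemma aa_unif {G : ℕ → ℝ → (Fin n → ℝ)} {g : ℝ → (Fin n → ℝ)}
    (hG : ∀ m, AlmostAutomorphic (G m))
    (happ : ∀ ε > (0:ℝ), ∃ N, ∀ m ≥ N, ∀ t, ‖G m t - g t‖ ≤ ε) :
    AlmostAutomorphic g := by
  intro s
  classical
  let pick : (ℕ → ℕ) → ℕ → (ℕ → ℕ) := fun φ m => (hG m (s ∘ φ)).choose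
  let F : ℕ → ℕ → ℕ := fun m => Nat.rec (motive := fun _ => ℕ → ℕ) id
    (fun m' φ => φ ∘ pick φ m') m
  have hFsucc : ∀ m, F (m+1) = F m ∘ pick (F m) m := fun m => rfl
  have hpickSM : ∀ m, StrictMono (pick (F m) m) := fun m => (hG m (s ∘ F m)).choose_spec.1
  let H : ℕ → ℝ → (Fin n → ℝ) := fun m => (hG m (s ∘ F m)).choose_spec.2.choose
  have hP1 : ∀ m t, Tendsto (fun k => G m (t + s (F (m+1) k))) atTop (nhds (H m t)) :=
    fun m => ((hG m (s ∘ F m)).choose_spec.2.choose_spec).1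
  have hP2 : ∀ m t, Tendsto (fun k => H m (t - s (F (m+1) k))) atTop (nhds (G m t)) :=
    fun m => ((hG m (s ∘ F m)).choose_spec.2.choose_spec).2
  have hFSM : ∀ m, StrictMono (F m) := by
    intro m
    induction m with
    | zero => exact strictMono_id
    | succ m ih => exact ih.comp (hpickSM m)
  have href : ∀ m l, m ≤ l → ∀ k, ∃ j, k ≤ j ∧ F l k = F m j := by
    intro m l hml
    induction l, hml using Nat.le_induction with
    | base => exact fun k => ⟨k, le_rfl, rfl⟩
    | succ l hml ih =>
      intro k
      obtain ⟨j, hj, hFe⟩ := ih (pick (F l) l k)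
      exact ⟨j, le_trans (hpickSM l).le_apply hj, hFe⟩
  let d : ℕ → ℕ := fun k => F k k
  have hdSM : StrictMono d := by
    refine strictMono_nat_of_lt_succ (fun k => ?_)
    have h1 : d (k+1) = F k (pick (F k) k (k+1)) := rfl
    have h2 : k < pick (F k) k (k+1) :=
      lt_of_lt_of_le (Nat.lt_succ_self k) (hpickSM k).le_apply
    rw [h1]
    exact (hFSM k) h2
  have hdtail : ∀ m k, m ≤ k → ∃ j, k ≤ j ∧ d k = F m j := fun m k hmk => href m k hmk k
  have hQ1 : ∀ m t, Tendsto (fun k => G m (t + s (d k))) atTop (nhds (H m t)) := by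
    intro m t
    rw [Metric.tendsto_atTop]
    intro ε hε
    have hp := hP1 m t
    rw [Metric.tendsto_atTop] at hp
    obtain ⟨N, hN⟩ := hp ε hε
    refine ⟨max (m+1) N, fun k hk => ?_⟩
    obtain ⟨j, hj, hdk⟩ := hdtail (m+1) k (le_trans (le_max_left _ _) hk)
    rw [hdk]
    exact hN j (le_trans (le_trans (le_max_right _ _) hk) hj)
  have hQ2 : ∀ m t, Tendsto (fun k => H m (t - s (d k))) atTop (nhds (G m t)) := by
    intro m t
    rw [Metric.tendsto_atTop]
    intro ε hε
    have hp := hP2 m t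
    rw [Metric.tendsto_atTop] at hp
    obtain ⟨N, hN⟩ := hp ε hε
    refine ⟨max (m+1) N, fun k hk => ?_⟩
    obtain ⟨j, hj, hdk⟩ := hdtail (m+1) k (le_trans (le_max_left _ _) hk)
    rw [hdk]
    exact hN j (le_trans (le_trans (le_max_right _ _) hk) hj)
  have hHdist : ∀ m l t (c1 c2 : ℝ), (∀ u, ‖G m u - g u‖ ≤ c1) →
      (∀ u, ‖G l u - g u‖ ≤ c2) → dist (H m t) (H l t) ≤ c1 + c2 := by
    intro m l t c1 c2 hm hl
    have h1 : Tendsto (fun k => dist (G m (t + s (d k))) (G l (t + s (d k)))) atTop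
        (nhds (dist (H m t) (H l t))) := (hQ1 m t).dist (hQ1 l t)
    refine le_of_tendsto h1 (Eventually.of_forall fun k => ?_)
    set u := t + s (d k)
    have h2 : dist (G m u) (G l u) ≤ dist (G m u) (g u) + dist (g u) (G l u) :=
      dist_triangle _ _ _
    have h3 : dist (G m u) (g u) ≤ c1 := by rw [dist_eq_norm]; exact hm u
    have h4 : dist (g u) (G l u) ≤ c2 := by
      rw [dist_eq_norm, norm_sub_rev]; exact hl u
    linarith
  have hHcauchy : ∀ t, CauchySeq (fun m => H m t) := by
    intro t
    rw [Metric.cauchySeq_iff]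
    intro ε hε
    obtain ⟨N, hN⟩ := happ (ε/3) (by linarith)
    exact ⟨N, fun m hm l hl =>
      lt_of_le_of_lt (hHdist m l t (ε/3) (ε/3) (hN m hm) (hN l hl)) (by linarith)⟩
  choose h hh using fun t => cauchySeq_tendsto_of_complete (hHcauchy t)
  have hHg : ∀ m t (c : ℝ), (∀ u, ‖G m u - g u‖ ≤ c) → ∀ ε > (0:ℝ),
      dist (H m t) (h t) ≤ c + ε := by
    intro m t c hm ε hε
    obtain ⟨N, hN⟩ := happ ε hε
    have htd : Tendsto (fun l => dist (H m t) (H l t)) atTop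
        (nhds (dist (H m t) (h t))) := tendsto_const_nhds.dist (hh t)
    refine le_of_tendsto htd ?_
    filter_upwards [eventually_ge_atTop N] with l hl
    exact hHdist m l t c ε hm (hN l hl)
  refine ⟨d, hdSM, h, fun t => ?_, fun t => ?_⟩
  · rw [Metric.tendsto_atTop]
    intro ε hε
    obtain ⟨N1, hN1⟩ := happ (ε/8) (by linarith)
    have hq := hQ1 N1 t
    rw [Metric.tendsto_atTop] at hq
    obtain ⟨N2, hN2⟩ := hq (ε/8) (by linarith)
    refine ⟨N2, fun k hk => ?_⟩
    have d1 : dist (g (t + s (d k))) (G N1 (t + s (d k))) ≤ ε/8 := by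
      rw [dist_eq_norm, norm_sub_rev]
      exact hN1 N1 le_rfl _
    have d2 : dist (G N1 (t + s (d k))) (H N1 t) < ε/8 := hN2 k hk
    have d3 : dist (H N1 t) (h t) ≤ ε/8 + ε/8 :=
      hHg N1 t (ε/8) (hN1 N1 le_rfl) (ε/8) (by linarith)
    have htr : dist (g (t + s (d k))) (h t) ≤
        dist (g (t + s (d k))) (G N1 (t + s (d k))) +
        dist (G N1 (t + s (d k))) (H N1 t) + dist (H N1 t) (h t) :=
      dist_triangle4 _ _ _ _
    linarith
  · rw [Metric.tendsto_atTop]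
    intro ε hε
    obtain ⟨N1, hN1⟩ := happ (ε/8) (by linarith)
    have hq := hQ2 N1 t
    rw [Metric.tendsto_atTop] at hq
    obtain ⟨N2, hN2⟩ := hq (ε/8) (by linarith)
    refine ⟨N2, fun k hk => ?_⟩
    have d1 : dist (h (t - s (d k))) (H N1 (t - s (d k))) ≤ ε/8 + ε/8 := by
      rw [dist_comm]
      exact hHg N1 _ (ε/8) (hN1 N1 le_rfl) (ε/8) (by linarith)
    have d2 : dist (H N1 (t - s (d k))) (G N1 t) < ε/8 := hN2 k hk
    have d3 : dist (G N1 t) (g t) ≤ ε/8 := by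
      rw [dist_eq_norm]
      exact hN1 N1 le_rfl t
    have htr : dist (h (t - s (d k))) (g t) ≤
        dist (h (t - s (d k))) (H N1 (t - s (d k))) +
        dist (H N1 (t - s (d k))) (G N1 t) + dist (G N1 t) (g t) :=
      dist_triangle4 _ _ _ _
    linarith

end Stmt13Aux

set_option synthInstance.maxHeartbeats 1000000 in
set_option maxHeartbeats 2000000 in
theorem stmt_13 {n : ℕ} (ν : ℝ → ℝ) (hν : WeightUB ν) :
    IsClosed {F : ℝ →ᵇ (Fin n → ℝ) |
      ∃ g φ : ℝ → (Fin n → ℝ), AlmostAutomorphic g ∧ WPAA0 ν φ ∧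
        ∀ t, F t = g t + φ t} := by
  classical
  apply IsSeqClosed.isClosed
  intro Fs F hmem hlim
  choose gs φs hgs hφs hdecomp using hmem
  -- the AA parts are bounded continuous
  have hgeq : ∀ k, gs k = fun t => Fs k t - φs k t := by
    intro k
    funext t
    rw [hdecomp k t]
    abel
  have hgc : ∀ k, Continuous (gs k) := by
    intro k
    rw [hgeq k]
    exact (Fs k).continuous.sub (hφs k).1
  have hbd : ∀ k, ∃ C, ∀ t, ‖gs k t‖ ≤ C := by
    intro k
    obtain ⟨C, hC⟩ := (hφs k).2.1
    refine ⟨‖Fs k‖ + C, fun t => ?_⟩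
    rw [hgeq k]
    exact (norm_sub_le _ _).trans (add_le_add ((Fs k).norm_coe_le_norm t) (hC t))
  let Gk : ℕ → (ℝ →ᵇ (Fin n → ℝ)) := fun k =>
    BoundedContinuousFunction.ofNormedAddCommGroup (gs k) (hgc k) (hbd k).choose
      (hbd k).choose_spec
  have hGk : ∀ k t, Gk k t = gs k t := fun k t => rfl
  -- the key Cauchy estimate
  have hkey : ∀ k l t, ‖gs k t - gs l t‖ ≤ ‖Fs k - Fs l‖ := by
    intro k l
    have hAA := Stmt13Aux.aa_sub (hgs k) (hgs l)
    have hW := Stmt13Aux.wpaa0_sub hν (hφs k) (hφs l)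
    refine Stmt13Aux.key_est hν hAA hW (C := ‖Fs k - Fs l‖) (fun u => ?_)
    have e : gs k u - gs l u + (φs k u - φs l u) = Fs k u - Fs l u := by
      rw [hdecomp k u, hdecomp l u]
      abel
    show ‖gs k u - gs l u + (φs k u - φs l u)‖ ≤ ‖Fs k - Fs l‖
    rw [e]
    have := (Fs k - Fs l).norm_coe_le_norm u
    simpa using this
  have hGcauchy : CauchySeq Gk := by
    rw [Metric.cauchySeq_iff]
    intro ε hε
    have hF := hlim.cauchySeq
    rw [Metric.cauchySeq_iff] at hF
    obtain ⟨N, hN⟩ := hF ε hε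
    refine ⟨N, fun k hk l hl => lt_of_le_of_lt ?_ (hN k hk l hl)⟩
    rw [dist_eq_norm, dist_eq_norm]
    refine (norm_le (norm_nonneg _)).2 (fun t => ?_)
    have : (Gk k - Gk l) t = gs k t - gs l t := rfl
    rw [this]
    exact hkey k l t
  obtain ⟨G, hGlim⟩ := cauchySeq_tendsto_of_complete hGcauchy
  have hGdist : ∀ ε > (0:ℝ), ∃ N, ∀ m ≥ N, ∀ t, ‖gs m t - G t‖ ≤ ε := by
    intro ε hε
    rw [Metric.tendsto_atTop] at hGlim
    obtain ⟨N, hN⟩ := hGlim ε hε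
    refine ⟨N, fun m hm t => ?_⟩
    have h1 : ‖gs m t - G t‖ = ‖(Gk m - G) t‖ := rfl
    rw [h1]
    exact ((Gk m - G).norm_coe_le_norm t).trans (by
      rw [← dist_eq_norm]
      exact (hN m hm).le)
  refine ⟨⇑G, fun t => F t - G t, ?_, ?_, fun t => by simp⟩
  · exact Stmt13Aux.aa_unif hgs hGdist
  · refine Stmt13Aux.wpaa0_of_unif hν hφs (F.continuous.sub G.continuous)
      ⟨‖F‖ + ‖G‖, fun t => (norm_sub_le _ _).trans
        (add_le_add (F.norm_coe_le_norm t) (G.norm_coe_le_norm t))⟩ ?_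
    intro ε hε
    rw [Metric.tendsto_atTop] at hGlim
    obtain ⟨N1, hN1⟩ := hGlim (ε/2) (by linarith)
    have hl2 := hlim
    rw [Metric.tendsto_atTop] at hl2
    obtain ⟨N2, hN2⟩ := hl2 (ε/2) (by linarith)
    refine ⟨max N1 N2, fun t => ?_⟩
    have hphi : φs (max N1 N2) t = Fs (max N1 N2) t - gs (max N1 N2) t := by
      rw [hdecomp (max N1 N2) t]
      abel
    rw [hphi]
    have e : F t - G t - (Fs (max N1 N2) t - gs (max N1 N2) t) =
        (F t - Fs (max N1 N2) t) + (gs (max N1 N2) t - G t) := by abel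
    rw [e]
    refine (norm_add_le _ _).trans ?_
    have h1 : ‖F t - Fs (max N1 N2) t‖ ≤ ε/2 := by
      have hd : dist (Fs (max N1 N2)) F < ε/2 := hN2 _ (le_max_right _ _)
      calc ‖F t - Fs (max N1 N2) t‖ = ‖(Fs (max N1 N2) - F) t‖ := by
            rw [BoundedContinuousFunction.coe_sub, Pi.sub_apply, norm_sub_rev]
        _ ≤ ‖Fs (max N1 N2) - F‖ := norm_coe_le_norm _ _
        _ = dist (Fs (max N1 N2)) F := (dist_eq_norm _ _).symm
        _ ≤ ε/2 := hd.le
    have h2 : ‖gs (max N1 N2) t - G t‖ ≤ ε/2 := by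
      have he : ‖gs (max N1 N2) t - G t‖ = ‖(Gk (max N1 N2) - G) t‖ := rfl
      rw [he]
      refine ((Gk (max N1 N2) - G).norm_coe_le_norm t).trans ?_
      rw [← dist_eq_norm]
      exact (hN1 _ (le_max_left _ _)).le
    linarith
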